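/- arXiv:1806.05200 — 2 statements merged into one kernel-verified Lean document; each statement's English description precedes it below -/
import Mathlib

section
/- For n ≥ 3, the colon ideal I : xz of the join-meet ideal I = (y_i y_j − xz : 1 ≤ i < j ≤ n) of the diamond lattice D_{n+2} in S = K[x, y_1, …, y_n, z] equals the ideal (y_1 − y_n, y_2 − y_n, …, y_{n−1} − y_n, y_n² − xz), and y_1 − y_n, …, y_{n−1} − y_n, y_n² − xz is a regular sequence in S. -/
open MvPolynomial

noncomputable def xP (K : Type*) [Field K] (n : ℕ) : MvPolynomial (Fin (n + 2)) K := X 0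
noncomputable def zP (K : Type*) [Field K] (n : ℕ) : MvPolynomial (Fin (n + 2)) K :=
  X (Fin.last (n + 1))
noncomputable def yP (K : Type*) [Field K] (n : ℕ) (i : Fin n) : MvPolynomial (Fin (n + 2)) K :=
  X i.succ.castSucc

/-- The join-meet ideal `I` of the diamond lattice `D_{n+2}`. -/
noncomputable def diamondIdeal (K : Type*) [Field K] (n : ℕ) :
    Ideal (MvPolynomial (Fin (n + 2)) K) :=
  Ideal.span {f | ∃ i j : Fin n, i < j ∧ f = yP K n i * yP K n j - xP K n * zP K n}

/-- Regular sequence (elementwise colon characterization). -/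
def IsRegSeq {R : Type*} [CommRing R] {m : ℕ} (f : Fin m → R) : Prop :=
  (∀ k : Fin m, ∀ s : R,
      f k * s ∈ Ideal.span (f '' {j | j < k}) → s ∈ Ideal.span (f '' {j | j < k})) ∧
    Ideal.span (Set.range f) ≠ ⊤

/-- The sequence `y_1 - y_n, …, y_{n-1} - y_n, y_n² - xz`. -/
noncomputable def colonSeq (K : Type*) [Field K] (n : ℕ) (hn : 1 ≤ n) :
    Fin n → MvPolynomial (Fin (n + 2)) K :=
  fun i =>
    if (i : ℕ) < n - 1 then yP K n i - yP K n ⟨n - 1, by omega⟩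
    else yP K n ⟨n - 1, by omega⟩ ^ 2 - xP K n * zP K n

section Aux
variable {K : Type*} [Field K]

lemma sub_bind_mem_span {R : Type*} [CommRing R] {τ : Type*} (σf : τ → MvPolynomial τ R)
    (p : MvPolynomial τ R) :
    p - bind₁ σf p ∈ Ideal.span (Set.range fun v => (X v : MvPolynomial τ R) - σf v) := by
  induction p using MvPolynomial.induction_on with
  | C a => simp
  | add p q hp hq =>
    have := Ideal.add_mem _ hp hq
    simpa [sub_add_sub_comm] using this
  | mul_X p v hp =>
    have h1 : p * X v - bind₁ σf (p * X v)
        = p * (X v - σf v) + (p - bind₁ σf p) * σf v := by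
      rw [map_mul, bind₁_X_right]; ring
    rw [h1]
    exact Ideal.add_mem _ (Ideal.mul_mem_left _ _ (Ideal.subset_span ⟨v, rfl⟩))
      (Ideal.mul_mem_right _ _ hp)

lemma prime_X_mv {m : ℕ} (i : Fin (m + 1)) :
    Prime (X i : MvPolynomial (Fin (m + 1)) K) := by
  rw [← MulEquiv.prime_iff (renameEquiv K (Equiv.swap i 0)).toMulEquiv]
  have h1 : (renameEquiv K (Equiv.swap i 0)).toMulEquiv (X i)
      = (X 0 : MvPolynomial (Fin (m+1)) K) := by
    simp [renameEquiv_apply, rename_X]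
  rw [h1, ← MulEquiv.prime_iff (finSuccEquiv K m).toMulEquiv]
  have h2 : (finSuccEquiv K m).toMulEquiv (X 0)
      = (Polynomial.X : Polynomial (MvPolynomial (Fin m) K)) := by
    simpa using finSuccEquiv_X_zero (R := K) (n := m)
  rw [h2]
  exact Polynomial.prime_X

lemma not_X_dvd_X {m : ℕ} {i j : Fin m} (h : i ≠ j) :
    ¬ (X i : MvPolynomial (Fin m) K) ∣ X j := by
  intro hd
  have := map_dvd (eval (fun v => if v = i then (0:K) else 1)) hd
  rw [eval_X, eval_X, if_pos rfl, if_neg h.symm, zero_dvd_iff] at this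
  exact one_ne_zero this

lemma irreducible_linear' {A : Type*} [CommRing A] [IsDomain A] {a b : A}
    (ha : Prime a) (hab : ¬ a ∣ b) :
    Irreducible (Polynomial.C b - Polynomial.X * Polynomial.C a) := by
  set q : Polynomial A := Polynomial.C b - Polynomial.X * Polynomial.C a with hq
  have ha0 : a ≠ 0 := ha.ne_zero
  have hqd : q.natDegree = 1 := by
    have : q = Polynomial.C (-a) * Polynomial.X + Polynomial.C b := by rw [hq, map_neg]; ring
    rw [this]
    exact Polynomial.natDegree_linear (neg_ne_zero.mpr ha0)
  have hq0 : q ≠ 0 := fun h => by simp [h] at hqd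
  have hc1 : q.coeff 1 = -a := by simp [hq, Polynomial.coeff_X_mul]
  have hc0 : q.coeff 0 = b := by simp [hq]
  have key : ∀ g : Polynomial A, g.natDegree = 0 → g ∣ q → IsUnit g := by
    intro g hg hdvd
    obtain ⟨c, rfl⟩ : ∃ c, g = Polynomial.C c := ⟨g.coeff 0, Polynomial.eq_C_of_natDegree_eq_zero hg⟩
    rw [Polynomial.C_dvd_iff_dvd_coeff] at hdvd
    have hca : c ∣ a := by have := hdvd 1; rw [hc1] at this; exact dvd_neg.mp this
    have hcb : c ∣ b := hc0 ▸ hdvd 0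
    rw [Polynomial.isUnit_C]
    obtain ⟨d, hd⟩ := hca
    rcases ha.irreducible.isUnit_or_isUnit hd with h | h
    · exact h
    · exfalso; apply hab
      obtain ⟨u, hu⟩ := h.exists_right_inv
      exact Dvd.dvd.trans ⟨u, by rw [hd, mul_assoc, hu, mul_one]⟩ hcb
  constructor
  · intro h
    have := Polynomial.natDegree_eq_zero_of_isUnit h
    omega
  · intro g h hgh
    have hg0 : g ≠ 0 := fun e => hq0 (by simp [hgh, e])
    have hh0 : h ≠ 0 := fun e => hq0 (by simp [hgh, e])
    have : g.natDegree + h.natDegree = 1 := by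
      rw [← Polynomial.natDegree_mul hg0 hh0, ← hgh, hqd]
    rcases Nat.eq_zero_or_pos g.natDegree with h1 | h1
    · exact Or.inl (key g h1 ⟨h, hgh⟩)
    · exact Or.inr (key h (by omega) ⟨g, by rw [hgh, mul_comm]⟩)

lemma prime_quadric {n : ℕ} (hn : 1 ≤ n) :
    Prime ((X ⟨n, by omega⟩ : MvPolynomial (Fin (n+2)) K) ^ 2
      - X 0 * X (Fin.last (n+1))) := by
  rw [← MulEquiv.prime_iff (finSuccEquiv K (n+1)).toMulEquiv]
  have hy : (⟨n, by omega⟩ : Fin (n+2)) = Fin.succ ⟨n-1, by omega⟩ := by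
    apply Fin.ext; simp only [Fin.val_succ]; omega
  have hz : (Fin.last (n+1) : Fin (n+2)) = Fin.succ (Fin.last n) := rfl
  have himg : (finSuccEquiv K (n+1)).toMulEquiv
      ((X ⟨n, by omega⟩ : MvPolynomial (Fin (n+2)) K) ^ 2 - X 0 * X (Fin.last (n+1)))
      = Polynomial.C ((X ⟨n-1, by omega⟩ : MvPolynomial (Fin (n+1)) K)^2)
        - Polynomial.X * Polynomial.C (X (Fin.last n)) := by
    show (finSuccEquiv K (n+1)) _ = _
    rw [map_sub, map_pow, map_mul, hy, hz, finSuccEquiv_X_succ, finSuccEquiv_X_succ,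
      finSuccEquiv_X_zero, map_pow]
  rw [himg]
  apply UniqueFactorizationMonoid.irreducible_iff_prime.mp
  apply irreducible_linear'
  · exact prime_X_mv _
  · intro hd
    have h1 : (X (Fin.last n) : MvPolynomial (Fin (n+1)) K) ∣ X ⟨n-1, by omega⟩ := by
      have := (prime_X_mv (K := K) (Fin.last n)).2.2 _ _ (by rwa [← sq])
      tauto
    exact not_X_dvd_X (by simp [Fin.ext_iff]; omega) h1

/-- The collapsing substitution sending `y_j ↦ y_{n-1}` for `j < k`. -/
noncomputable def sig (K : Type*) [Field K] (n k : ℕ) :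
    Fin (n+2) → MvPolynomial (Fin (n+2)) K :=
  fun v => if 1 ≤ (v : ℕ) ∧ (v : ℕ) ≤ k then X ⟨n, by omega⟩ else X v

variable {n : ℕ}

lemma val_mk {m a : ℕ} (h : a < m) : ((⟨a, h⟩ : Fin m) : ℕ) = a := rfl

lemma sig_apply (k : ℕ) (v : Fin (n+2)) :
    sig K n k v = if 1 ≤ (v : ℕ) ∧ (v : ℕ) ≤ k then X ⟨n, by omega⟩ else X v := rfl

lemma yP_eq (i : Fin n) : yP K n i = X ⟨(i : ℕ) + 1, by omega⟩ := by
  rfl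

lemma yPn_eq (hn : 1 ≤ n) : yP K n ⟨n - 1, by omega⟩ = X ⟨n, by omega⟩ := by
  rw [yP_eq]; congr 1; apply Fin.ext; show n - 1 + 1 = n; omega

lemma bind_sig_gen {k : ℕ} (hk : k < n) (v : Fin (n+2)) :
    bind₁ (sig K n k) ((X v : MvPolynomial (Fin (n+2)) K) - sig K n k v) = 0 := by
  rw [map_sub, bind₁_X_right, sig_apply k v]
  split_ifs with h
  · rw [bind₁_X_right, sig_apply, if_neg (by rw [val_mk]; omega), sub_self]
  · rw [bind₁_X_right, sig_apply, if_neg h, sub_self]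

lemma span_sub_ker {k : ℕ} (hk : k < n) {p : MvPolynomial (Fin (n+2)) K}
    (hp : p ∈ Ideal.span (Set.range fun v => (X v : MvPolynomial (Fin (n+2)) K) - sig K n k v)) :
    bind₁ (sig K n k) p = 0 := by
  have hle : Ideal.span (Set.range fun v => (X v : MvPolynomial (Fin (n+2)) K) - sig K n k v)
      ≤ RingHom.ker (bind₁ (sig K n k)).toRingHom := by
    rw [Ideal.span_le]
    rintro f ⟨v, rfl⟩
    rw [SetLike.mem_coe, RingHom.mem_ker]
    exact bind_sig_gen hk v
  exact hle hp

lemma mem_span_from_ker {k : ℕ} {s : MvPolynomial (Fin (n+2)) K}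
    (hs : bind₁ (sig K n k) s = 0) :
    s ∈ Ideal.span (Set.range fun v => (X v : MvPolynomial (Fin (n+2)) K) - sig K n k v) := by
  have := sub_bind_mem_span (sig K n k) s
  rwa [hs, sub_zero] at this

lemma span_eq_span (hn : 3 ≤ n) (k : Fin n) :
    Ideal.span (colonSeq K n (Nat.le_of_succ_le (Nat.le_of_succ_le hn)) '' {j | j < k})
      = Ideal.span (Set.range fun v =>
          (X v : MvPolynomial (Fin (n+2)) K) - sig K n (k : ℕ) v) := by
  have hk : (k : ℕ) ≤ n - 1 := by have := k.isLt; omega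
  apply le_antisymm
  · rw [Ideal.span_le]
    rintro f ⟨j, hj, rfl⟩
    have hjk : (j : ℕ) < (k : ℕ) := hj
    have hcs : colonSeq K n (Nat.le_of_succ_le (Nat.le_of_succ_le hn)) j
        = X ⟨(j : ℕ) + 1, by omega⟩ - X ⟨n, by omega⟩ := by
      unfold colonSeq
      rw [if_pos (by omega), yP_eq, yPn_eq (by omega)]
    apply Ideal.subset_span
    refine ⟨⟨(j : ℕ) + 1, by omega⟩, ?_⟩
    simp only [sig_apply]
    rw [if_pos (by rw [val_mk]; omega), hcs]
  · rw [Ideal.span_le]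
    rintro f ⟨v, rfl⟩
    by_cases hv : 1 ≤ (v : ℕ) ∧ (v : ℕ) ≤ (k : ℕ)
    · apply Ideal.subset_span
      refine ⟨⟨(v : ℕ) - 1, by omega⟩, ?_, ?_⟩
      · show ((⟨(v : ℕ) - 1, by omega⟩ : Fin n)) < k
        rw [Fin.lt_def, val_mk]; omega
      · simp only [sig_apply]
        rw [if_pos hv]
        unfold colonSeq
        rw [if_pos (by rw [val_mk]; omega), yP_eq, yPn_eq (by omega)]
        congr 2
        apply Fin.ext; rw [val_mk]; show (v:ℕ) - 1 + 1 = _; omega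
    · simp only [sig_apply]
      rw [if_neg hv, sub_self]
      exact Ideal.zero_mem _

end Aux

section Main
variable {K : Type*} [Field K] {n : ℕ}

lemma colonSeq_eq_lt (hn : 3 ≤ n) {k : Fin n} (hk : (k : ℕ) < n - 1) :
    colonSeq K n (Nat.le_of_succ_le (Nat.le_of_succ_le hn)) k = X ⟨(k : ℕ) + 1, by omega⟩ - X ⟨n, by omega⟩ := by
  unfold colonSeq; rw [if_pos hk, yP_eq, yPn_eq (by omega)]

lemma colonSeq_eq_last (hn : 3 ≤ n) {k : Fin n} (hk : ¬ (k : ℕ) < n - 1) :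
    colonSeq K n (Nat.le_of_succ_le (Nat.le_of_succ_le hn)) k = X ⟨n, by omega⟩ ^ 2 - xP K n * zP K n := by
  unfold colonSeq; rw [if_neg hk, yPn_eq (by omega)]

lemma sig_fix_colonSeq (hn : 3 ≤ n) (k : Fin n) :
    bind₁ (sig K n (k : ℕ)) (colonSeq K n (Nat.le_of_succ_le (Nat.le_of_succ_le hn)) k) = colonSeq K n (Nat.le_of_succ_le (Nat.le_of_succ_le hn)) k := by
  have hkn : (k : ℕ) < n := k.isLt
  by_cases hk : (k : ℕ) < n - 1
  · rw [colonSeq_eq_lt hn hk, map_sub, bind₁_X_right, bind₁_X_right,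
      sig_apply, sig_apply, if_neg (by rw [val_mk]; omega), if_neg (by rw [val_mk]; omega)]
  · have hkval : (k : ℕ) = n - 1 := by omega
    rw [colonSeq_eq_last hn hk]
    unfold xP zP
    rw [map_sub, map_pow, map_mul, bind₁_X_right, bind₁_X_right, bind₁_X_right,
      sig_apply, sig_apply, sig_apply, if_neg (by rw [val_mk]; omega),
      if_neg (by simp only [Fin.val_zero]; omega),
      if_neg (by simp only [Fin.val_last]; omega)]

lemma colonSeq_ne_zero (hn : 3 ≤ n) (k : Fin n) : colonSeq K n (Nat.le_of_succ_le (Nat.le_of_succ_le hn)) k ≠ 0 := by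
  have hkn : (k : ℕ) < n := k.isLt
  by_cases hk : (k : ℕ) < n - 1
  · rw [colonSeq_eq_lt hn hk]
    intro h
    have := congrArg (eval (fun v => if v = (⟨(k : ℕ) + 1, by omega⟩ : Fin (n+2)) then (1:K)
      else 0)) h
    rw [map_sub, eval_X, eval_X, map_zero, if_pos rfl,
      if_neg (by simp only [Fin.ext_iff, val_mk]; omega)] at this
    norm_num at this
  · rw [colonSeq_eq_last hn hk]
    intro h
    unfold xP zP at h
    have := congrArg (eval (fun v => if v = (⟨n, by omega⟩ : Fin (n+2)) then (1:K) else 0)) h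
    rw [map_sub, map_pow, map_mul, eval_X, eval_X, eval_X, map_zero, if_pos rfl,
      if_neg (by simp only [Fin.ext_iff, Fin.val_zero, val_mk]; omega),
      if_neg (by simp only [Fin.ext_iff, Fin.val_last, val_mk]; omega)] at this
    norm_num at this

end Main

theorem diamond_colon_xz (K : Type*) [Field K] (n : ℕ) (hn : 3 ≤ n) :
    Submodule.colon (diamondIdeal K n) (Ideal.span {xP K n * zP K n}) =
        Ideal.span (Set.range (colonSeq K n (by omega))) ∧
      IsRegSeq (colonSeq K n (by omega)) := by
  have hreg : IsRegSeq (colonSeq K n (by omega : 1 ≤ n)) := by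
    constructor
    · intro k s hs
      rw [span_eq_span hn k] at hs ⊢
      have h0 := span_sub_ker (k := (k : ℕ)) k.isLt hs
      rw [map_mul, sig_fix_colonSeq hn k] at h0
      rcases mul_eq_zero.mp h0 with h | h
      · exact absurd h (colonSeq_ne_zero hn k)
      · exact mem_span_from_ker h
    · intro htop
      have hmem : (1 : MvPolynomial (Fin (n+2)) K)
          ∈ Ideal.span (Set.range (colonSeq K n (by omega : 1 ≤ n))) := by
        rw [htop]; trivial
      have hle : Ideal.span (Set.range (colonSeq K n (by omega : 1 ≤ n)))
          ≤ RingHom.ker (eval (fun _ => (1:K))) := by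
        rw [Ideal.span_le]
        rintro f ⟨kk, rfl⟩
        rw [SetLike.mem_coe, RingHom.mem_ker]
        by_cases hk : (kk : ℕ) < n - 1
        · rw [colonSeq_eq_lt hn hk, map_sub, eval_X, eval_X, sub_self]
        · rw [colonSeq_eq_last hn hk]
          unfold xP zP
          rw [map_sub, map_pow, map_mul, eval_X, eval_X, eval_X]
          norm_num
      have h1 := hle hmem
      rw [RingHom.mem_ker, map_one] at h1
      exact one_ne_zero h1
  set F : MvPolynomial (Fin (n+2)) K := (X ⟨n, by omega⟩ : MvPolynomial (Fin (n+2)) K) ^ 2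
    - xP K n * zP K n with hF
  have fprime : Prime F := by
    rw [hF]; unfold xP zP; exact prime_quadric (by omega)
  have hFmem : F ∈ Ideal.span (Set.range (colonSeq K n (by omega : 1 ≤ n))) :=
    Ideal.subset_span ⟨⟨n - 1, by omega⟩, by
      rw [colonSeq_eq_last hn (by rw [val_mk]; omega), hF]⟩
  have hIJ : diamondIdeal K n ≤ Ideal.span (Set.range (colonSeq K n (by omega : 1 ≤ n))) := by
    unfold diamondIdeal
    rw [Ideal.span_le]
    rintro f ⟨i, j, hij, rfl⟩
    have hij' : (i : ℕ) < (j : ℕ) := hij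
    have hjn : (j : ℕ) ≤ n - 1 := by have := j.isLt; omega
    have hi : (i : ℕ) < n - 1 := by omega
    have hyi : yP K n i - yP K n ⟨n - 1, by omega⟩
        ∈ Ideal.span (Set.range (colonSeq K n (by omega : 1 ≤ n))) :=
      Ideal.subset_span ⟨i, by unfold colonSeq; rw [if_pos hi]⟩
    have hyj : yP K n j - yP K n ⟨n - 1, by omega⟩
        ∈ Ideal.span (Set.range (colonSeq K n (by omega : 1 ≤ n))) := by
      by_cases hj : (j : ℕ) < n - 1
      · exact Ideal.subset_span ⟨j, by unfold colonSeq; rw [if_pos hj]⟩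
      · have hj' : j = ⟨n - 1, by omega⟩ := Fin.ext (show (j : ℕ) = n - 1 by omega)
        rw [hj', sub_self]; exact Ideal.zero_mem _
    have hq : yP K n ⟨n - 1, by omega⟩ ^ 2 - xP K n * zP K n
        ∈ Ideal.span (Set.range (colonSeq K n (by omega : 1 ≤ n))) :=
      Ideal.subset_span ⟨⟨n - 1, by omega⟩,
        (by unfold colonSeq; rw [if_neg (show ¬ (((⟨n - 1, by omega⟩ : Fin n) : ℕ) < n - 1)
          by rw [val_mk]; omega)])⟩
    have hid : yP K n i * yP K n j - xP K n * zP K n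
        = yP K n i * (yP K n j - yP K n ⟨n - 1, by omega⟩)
          + yP K n ⟨n - 1, by omega⟩ * (yP K n i - yP K n ⟨n - 1, by omega⟩)
          + (yP K n ⟨n - 1, by omega⟩ ^ 2 - xP K n * zP K n) := by ring
    rw [SetLike.mem_coe, hid]
    exact add_mem (add_mem (Ideal.mul_mem_left _ _ hyj) (Ideal.mul_mem_left _ _ hyi)) hq
  have hcolon : Submodule.colon (diamondIdeal K n) (Ideal.span {xP K n * zP K n}) =
      Ideal.span (Set.range (colonSeq K n (by omega : 1 ≤ n))) := by
    apply le_antisymm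
    · intro s hs
      rw [Ideal.mem_colon_span_singleton] at hs
      have hsJ : s * (xP K n * zP K n)
          ∈ Ideal.span (Set.range (colonSeq K n (by omega : 1 ≤ n))) := hIJ hs
      have hle : Ideal.map (bind₁ (sig K n (n - 1)))
          (Ideal.span (Set.range (colonSeq K n (by omega : 1 ≤ n))))
          ≤ Ideal.span {F} := by
        rw [Ideal.map_span, Ideal.span_le]
        rintro g ⟨g', ⟨kk, rfl⟩, rfl⟩
        rw [SetLike.mem_coe]
        by_cases hk : (kk : ℕ) < n - 1
        · have hkn : (kk : ℕ) < n := kk.isLt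
          rw [colonSeq_eq_lt hn hk, map_sub, bind₁_X_right, bind₁_X_right,
            sig_apply, sig_apply, if_pos (by rw [val_mk]; omega),
            if_neg (by rw [val_mk]; omega), sub_self]
          exact Ideal.zero_mem _
        · rw [colonSeq_eq_last hn hk]
          unfold xP zP
          rw [map_sub, map_pow, map_mul, bind₁_X_right, bind₁_X_right, bind₁_X_right,
            sig_apply, sig_apply, sig_apply, if_neg (by rw [val_mk]; omega),
            if_neg (by simp only [Fin.val_zero]; omega),
            if_neg (by simp only [Fin.val_last]; omega)]
          exact Ideal.subset_span (by rw [hF]; unfold xP zP; exact rfl)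
      have hmap : bind₁ (sig K n (n - 1)) s * (xP K n * zP K n) ∈ Ideal.span {F} := by
        have h2 := hle (Ideal.mem_map_of_mem (bind₁ (sig K n (n - 1))) hsJ)
        rw [map_mul, map_mul] at h2
        have hx : bind₁ (sig K n (n - 1)) (xP K n) = xP K n := by
          unfold xP; rw [bind₁_X_right, sig_apply, if_neg (by simp only [Fin.val_zero]; omega)]
        have hz : bind₁ (sig K n (n - 1)) (zP K n) = zP K n := by
          unfold zP; rw [bind₁_X_right, sig_apply, if_neg (by simp only [Fin.val_last]; omega)]
        rwa [hx, hz] at h2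
      rw [Ideal.mem_span_singleton] at hmap
      have hnd : ∀ w : Fin (n+2), w ≠ ⟨n, by omega⟩ → (X w : MvPolynomial (Fin (n+2)) K)
          ∣ xP K n * zP K n → ¬ (F ∣ X w) := by
        intro w hw hwxz hdvd
        have hXF : (X w : MvPolynomial (Fin (n+2)) K) ∣ F :=
          (fprime.irreducible.associated_of_dvd (prime_X_mv w).irreducible hdvd).symm.dvd
        have h2 : (X w : MvPolynomial (Fin (n+2)) K) ∣ (X ⟨n, by omega⟩ : _) ^ 2 := by
          have h3 : F + xP K n * zP K n
              = (X ⟨n, by omega⟩ : MvPolynomial (Fin (n+2)) K) ^ 2 := by rw [hF]; ring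
          rw [← h3]; exact dvd_add hXF hwxz
        rw [sq] at h2
        rcases (prime_X_mv w).2.2 _ _ h2 with h4 | h4 <;> exact not_X_dvd_X hw h4
      rcases fprime.dvd_mul.mp hmap with hds | hdxz
      · have hψs : bind₁ (sig K n (n - 1)) s
            ∈ Ideal.span (Set.range (colonSeq K n (by omega : 1 ≤ n))) :=
          ((Ideal.span_singleton_le_iff_mem _).mpr hFmem) (Ideal.mem_span_singleton.mpr hds)
        have hsub : s - bind₁ (sig K n (n - 1)) s
            ∈ Ideal.span (Set.range (colonSeq K n (by omega : 1 ≤ n))) := by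
          have h1 := sub_bind_mem_span (sig K n (n - 1)) s
          have h2 := span_eq_span (K := K) hn ⟨n - 1, by omega⟩
          rw [val_mk] at h2
          rw [← h2] at h1
          exact Ideal.span_mono (Set.image_subset_range _ _) h1
        have h3 : s = (s - bind₁ (sig K n (n - 1)) s) + bind₁ (sig K n (n - 1)) s := by ring
        rw [h3]
        exact add_mem hsub hψs
      · exfalso
        rcases fprime.dvd_mul.mp hdxz with h | h
        · have hne : (0 : Fin (n+2)) ≠ ⟨n, by omega⟩ := by
            intro he
            rw [Fin.ext_iff] at he
            simp only [Fin.val_zero, val_mk] at he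
            omega
          exact hnd 0 hne (dvd_mul_right _ _) h
        · have hne : (Fin.last (n+1)) ≠ (⟨n, by omega⟩ : Fin (n+2)) := by
            intro he
            rw [Fin.ext_iff] at he
            simp only [Fin.val_last, val_mk] at he
            omega
          exact hnd (Fin.last (n+1)) hne (dvd_mul_left _ _) h
    · rw [Ideal.span_le]
      rintro f ⟨k, rfl⟩
      rw [SetLike.mem_coe, Ideal.mem_colon_span_singleton]
      by_cases hk : (k : ℕ) < n - 1
      · set j : Fin n := if (k : ℕ) = 0 then ⟨1, by omega⟩ else ⟨0, by omega⟩ with hj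
        have hjlt : (j : ℕ) < n - 1 := by
          rw [hj]; split_ifs <;> rw [val_mk] <;> omega
        have hjk : (j : ℕ) ≠ (k : ℕ) := by
          rw [hj]; split_ifs with h <;> rw [val_mk] <;> omega
        have hg1 : yP K n k * yP K n j - xP K n * zP K n ∈ diamondIdeal K n := by
          unfold diamondIdeal
          rcases Nat.lt_or_ge (k : ℕ) (j : ℕ) with h | h
          · exact Ideal.subset_span ⟨k, j, h, rfl⟩
          · exact Ideal.subset_span ⟨j, k, by rw [Fin.lt_def]; omega, by ring⟩
        have hg2 : yP K n j * yP K n ⟨n - 1, by omega⟩ - xP K n * zP K n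
            ∈ diamondIdeal K n := by
          unfold diamondIdeal
          exact Ideal.subset_span ⟨j, ⟨n - 1, by omega⟩, by rw [Fin.lt_def]; exact hjlt, rfl⟩
        have hid : colonSeq K n (by omega : 1 ≤ n) k * (xP K n * zP K n)
            = yP K n ⟨n - 1, by omega⟩ * (yP K n k * yP K n j - xP K n * zP K n)
              - yP K n k * (yP K n j * yP K n ⟨n - 1, by omega⟩ - xP K n * zP K n) := by
          unfold colonSeq; rw [if_pos hk]; ring
        rw [hid]
        exact sub_mem (Ideal.mul_mem_left _ _ hg1) (Ideal.mul_mem_left _ _ hg2)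
      · have hg1 : yP K n ⟨0, by omega⟩ * yP K n ⟨1, by omega⟩ - xP K n * zP K n
            ∈ diamondIdeal K n := by
          unfold diamondIdeal
          exact Ideal.subset_span ⟨⟨0, by omega⟩, ⟨1, by omega⟩,
            by rw [Fin.mk_lt_mk]; omega, rfl⟩
        have hg2 : yP K n ⟨0, by omega⟩ * yP K n ⟨n - 1, by omega⟩ - xP K n * zP K n
            ∈ diamondIdeal K n := by
          unfold diamondIdeal
          exact Ideal.subset_span ⟨⟨0, by omega⟩, ⟨n - 1, by omega⟩,
            by rw [Fin.mk_lt_mk]; omega, rfl⟩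
        have hg3 : yP K n ⟨1, by omega⟩ * yP K n ⟨n - 1, by omega⟩ - xP K n * zP K n
            ∈ diamondIdeal K n := by
          unfold diamondIdeal
          exact Ideal.subset_span ⟨⟨1, by omega⟩, ⟨n - 1, by omega⟩,
            by rw [Fin.mk_lt_mk]; omega, rfl⟩
        have hid : colonSeq K n (by omega : 1 ≤ n) k * (xP K n * zP K n)
            = (yP K n ⟨0, by omega⟩ * yP K n ⟨n - 1, by omega⟩ - xP K n * zP K n)
                * (yP K n ⟨1, by omega⟩ * yP K n ⟨n - 1, by omega⟩ - xP K n * zP K n)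
              - yP K n ⟨n - 1, by omega⟩ ^ 2
                * (yP K n ⟨0, by omega⟩ * yP K n ⟨1, by omega⟩ - xP K n * zP K n)
              + xP K n * zP K n
                * (yP K n ⟨0, by omega⟩ * yP K n ⟨n - 1, by omega⟩ - xP K n * zP K n)
              + xP K n * zP K n
                * (yP K n ⟨1, by omega⟩ * yP K n ⟨n - 1, by omega⟩ - xP K n * zP K n) := by
          unfold colonSeq; rw [if_neg hk]; ring
        rw [hid]
        exact add_mem (add_mem (sub_mem (Ideal.mul_mem_left _ _ hg3)
          (Ideal.mul_mem_left _ _ hg1)) (Ideal.mul_mem_left _ _ hg2))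
          (Ideal.mul_mem_left _ _ hg3)
  exact ⟨hcolon, hreg⟩
end

section
/- For n ≥ 3, the set { y_i y_j − zx : 1 ≤ i < j ≤ n } ∪ { x(y_k − y_n) : 1 ≤ k ≤ n−1 } ∪ { x(y_n² − xz) } is a Gröbner basis of the colon ideal J = I : z with respect to the reverse lexicographic order induced by x > y_1 > ⋯ > y_n > z, where I = (y_i y_j − xz : 1 ≤ i < j ≤ n) is the join-meet ideal of the diamond lattice D_{n+2} in S = K[x, y_1, …, y_n, z]. -/
open MvPolynomial

def mdeg {σ : Type*} (m : σ →₀ ℕ) : ℕ := m.sum fun _ e => e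
def revlexLt {N : ℕ} (a b : Fin N →₀ ℕ) : Prop :=
  mdeg a < mdeg b ∨ (mdeg a = mdeg b ∧ ∃ i, b i < a i ∧ ∀ j, i < j → a j = b j)
def IsLeadMon {N : ℕ} {K : Type*} [Field K] (f : MvPolynomial (Fin N) K) (m : Fin N →₀ ℕ) :
    Prop :=
  m ∈ f.support ∧ ∀ m' ∈ f.support, m' ≠ m → revlexLt m' m
noncomputable def initialIdeal {N : ℕ} (K : Type*) [Field K]
    (I : Ideal (MvPolynomial (Fin N) K)) : Ideal (MvPolynomial (Fin N) K) :=
  Ideal.span {p | ∃ f ∈ I, ∃ m, IsLeadMon f m ∧ p = monomial m (1 : K)}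
def IsGroebnerBasis {N : ℕ} {K : Type*} [Field K] (G : Set (MvPolynomial (Fin N) K))
    (I : Ideal (MvPolynomial (Fin N) K)) : Prop :=
  G ⊆ (I : Set (MvPolynomial (Fin N) K)) ∧
    initialIdeal K I = Ideal.span {p | ∃ g ∈ G, ∃ m, IsLeadMon g m ∧ p = monomial m (1 : K)}
lemma nl_lt {n : ℕ} (hn : 3 ≤ n) : n - 1 < n := by omega

-- order lemmas
section Order
variable {N : ℕ}

lemma mdeg_add (a b : Fin N →₀ ℕ) : mdeg (a + b) = mdeg a + mdeg b := by
  simpa [mdeg] using Finsupp.sum_add_index (h := fun _ e => e) (by simp) (by simp)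

lemma revlexLt_irrefl (a : Fin N →₀ ℕ) : ¬ revlexLt a a := by
  rintro (h | ⟨-, i, hi, -⟩) <;> omega

lemma revlexLt_trans {a b c : Fin N →₀ ℕ} (h1 : revlexLt a b) (h2 : revlexLt b c) :
    revlexLt a c := by
  rcases h1 with h1 | ⟨e1, i1, hi1, ha1⟩
  · rcases h2 with h2 | ⟨e2, -⟩
    · exact Or.inl (h1.trans h2)
    · exact Or.inl (e2 ▸ h1)
  · rcases h2 with h2 | ⟨e2, i2, hi2, ha2⟩
    · exact Or.inl (e1 ▸ h2)
    · refine Or.inr ⟨e1.trans e2, ?_⟩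
      rcases lt_trichotomy i1 i2 with h | h | h
      · exact ⟨i2, by rw [ha1 i2 h]; exact hi2, fun j hj => (ha1 j (h.trans hj)).trans (ha2 j hj)⟩
      · subst h
        exact ⟨i1, lt_trans hi2 hi1, fun j hj => (ha1 j hj).trans (ha2 j hj)⟩
      · exact ⟨i1, by rw [← ha2 i1 h]; exact hi1, fun j hj => (ha1 j hj).trans (ha2 j (h.trans hj))⟩

lemma mdeg_le_of_revlexLt {a b : Fin N →₀ ℕ} (h : revlexLt a b) : mdeg a ≤ mdeg b := by
  rcases h with h | ⟨h, -⟩ <;> omega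

lemma revlexLt_add_left {a b : Fin N →₀ ℕ} (u : Fin N →₀ ℕ) (h : revlexLt a b) :
    revlexLt (u + a) (u + b) := by
  rcases h with h | ⟨e, i, hi, ha⟩
  · exact Or.inl (by rw [mdeg_add, mdeg_add]; omega)
  · refine Or.inr ⟨by rw [mdeg_add, mdeg_add, e], i, ?_, fun j hj => ?_⟩
    · simpa using hi
    · simp [ha j hj]

lemma finite_mdeg_le (D : ℕ) : {m : Fin N →₀ ℕ | mdeg m ≤ D}.Finite := by
  have key : ∀ m : Fin N →₀ ℕ, mdeg m ≤ D → ∀ i, m i ≤ D := by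
    intro m hm i
    refine le_trans ?_ hm
    by_cases hi : i ∈ m.support
    · exact Finset.single_le_sum (f := fun i => m i) (fun _ _ => Nat.zero_le _) hi
    · simp [Finsupp.notMem_support_iff.mp hi]
  have : Set.InjOn (fun (m : Fin N →₀ ℕ) => (m : Fin N → ℕ)) {m | mdeg m ≤ D} :=
    fun a _ b _ h => DFunLike.coe_injective h
  refine Set.Finite.of_finite_image ?_ this
  refine Set.Finite.subset (Set.Finite.pi (fun i : Fin N => Set.finite_Iic D)) ?_
  rintro g ⟨m, hm, rfl⟩
  exact fun i _ => key m hm i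

noncomputable def rk (m : Fin N →₀ ℕ) : ℕ := Set.ncard {m' | revlexLt m' m}

lemma finite_pred (m : Fin N →₀ ℕ) : {m' | revlexLt m' m}.Finite :=
  (finite_mdeg_le (mdeg m)).subset fun _ h => mdeg_le_of_revlexLt h

lemma rk_lt_rk {a b : Fin N →₀ ℕ} (h : revlexLt a b) : rk a < rk b := by
  refine Set.ncard_lt_ncard ⟨fun c hc => revlexLt_trans hc h, fun hsub => ?_⟩ (finite_pred b)
  exact revlexLt_irrefl a (hsub h)

end Order
section Idx
variable {K : Type*} [Field K] {n : ℕ}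

def yI {n : ℕ} (i : Fin n) : Fin (n + 2) := i.succ.castSucc

lemma yI_val (i : Fin n) : (yI i : ℕ) = (i : ℕ) + 1 := rfl

lemma lastI_val : ((Fin.last (n+1) : Fin (n+2)) : ℕ) = n + 1 := rfl

lemma yI_ne_zero (i : Fin n) : yI i ≠ 0 := by
  intro h
  have := congrArg (Fin.val) h
  simp [yI_val] at this

lemma yI_ne_last (i : Fin n) : yI i ≠ Fin.last (n+1) := by
  intro h
  have := congrArg (Fin.val) h
  rw [yI_val, lastI_val] at this
  omega

lemma zero_ne_last : (0 : Fin (n+2)) ≠ Fin.last (n+1) := by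
  intro h
  have := congrArg (Fin.val) h
  rw [lastI_val] at this
  simp at this

lemma yI_inj {i j : Fin n} (h : yI i = yI j) : i = j := by
  have := congrArg (Fin.val) h
  rw [yI_val, yI_val] at this
  exact Fin.ext (by omega)

lemma var_cases (v : Fin (n+2)) : v = 0 ∨ v = Fin.last (n+1) ∨ ∃ i : Fin n, v = yI i := by
  rcases Nat.eq_zero_or_pos (v : ℕ) with h | h
  · exact Or.inl (Fin.ext (by simpa using h))
  · rcases Nat.lt_or_ge (v : ℕ) (n+1) with h2 | h2
    · refine Or.inr (Or.inr ⟨⟨(v:ℕ) - 1, by omega⟩, Fin.ext ?_⟩)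
      rw [yI_val]
      simp only []
      omega
    · refine Or.inr (Or.inl (Fin.ext ?_))
      rw [lastI_val]
      have := v.isLt
      omega

def Lset (n : ℕ) (hn : 3 ≤ n) : Set (Fin (n+2) →₀ ℕ) :=
  {s | ∃ i j : Fin n, i < j ∧ s = Finsupp.single (yI i) 1 + Finsupp.single (yI j) 1} ∪
  {s | ∃ k : Fin n, (k:ℕ) < n-1 ∧ s = Finsupp.single 0 1 + Finsupp.single (yI k) 1} ∪
  {Finsupp.single 0 1 + Finsupp.single (yI (⟨n-1, nl_lt hn⟩ : Fin n)) 2}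

def Std {n : ℕ} (hn : 3 ≤ n) (m : Fin (n+2) →₀ ℕ) : Prop := ¬ ∃ t ∈ Lset n hn, t ≤ m

lemma le_mono_iff {a b : Fin (n+2)} (hab : a ≠ b) (p q : ℕ) (m : Fin (n+2) →₀ ℕ) :
    Finsupp.single a p + Finsupp.single b q ≤ m ↔ p ≤ m a ∧ q ≤ m b := by
  rw [Finsupp.le_iff]
  constructor
  · intro h
    constructor
    · rcases Decidable.eq_or_ne p 0 with rfl | hp
      · simp
      · have := h a (by simp [Finsupp.single_apply, hab, hp])
        simpa [Finsupp.single_apply, hab.symm] using this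
    · rcases Decidable.eq_or_ne q 0 with rfl | hq
      · simp
      · have := h b (by simp [Finsupp.single_apply, hab, hq])
        simpa [Finsupp.single_apply, hab] using this
  · rintro ⟨h1, h2⟩ v hv
    rcases Decidable.eq_or_ne v a with rfl | ha
    · simpa [Finsupp.single_apply, hab.symm] using h1
    · rcases Decidable.eq_or_ne v b with rfl | hb
      · simpa [Finsupp.single_apply, hab, Finsupp.single_eq_of_ne (Ne.symm ha)] using h2
      · simp [Finsupp.single_eq_of_ne' (Ne.symm ha), Finsupp.single_eq_of_ne' (Ne.symm hb)] at hv

lemma std_y {hn : 3 ≤ n} {m} (hm : Std hn m) (i j : Fin n) (hij : i ≠ j) :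
    m (yI i) = 0 ∨ m (yI j) = 0 := by
  by_contra hc
  push_neg at hc
  rcases lt_or_gt_of_ne hij with h | h
  · exact hm ⟨_, Or.inl (Or.inl ⟨i, j, h, rfl⟩),
      (le_mono_iff (fun e => hij (yI_inj e)) 1 1 m).2 ⟨by omega, by omega⟩⟩
  · exact hm ⟨_, Or.inl (Or.inl ⟨j, i, h, rfl⟩),
      (le_mono_iff (fun e => hij.symm (yI_inj e)) 1 1 m).2 ⟨by omega, by omega⟩⟩

lemma std_xy {hn : 3 ≤ n} {m} (hm : Std hn m) (h0 : m 0 ≠ 0) (k : Fin n) (hk : (k:ℕ) < n-1) :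
    m (yI k) = 0 := by
  by_contra hc
  exact hm ⟨_, Or.inl (Or.inr ⟨k, hk, rfl⟩),
    (le_mono_iff (Ne.symm (yI_ne_zero k)) 1 1 m).2 ⟨by omega, by omega⟩⟩

lemma std_xyy {hn : 3 ≤ n} {m} (hm : Std hn m) (h0 : m 0 ≠ 0) :
    m (yI (⟨n-1, nl_lt hn⟩ : Fin n)) ≤ 1 := by
  by_contra hc
  exact hm ⟨_, Or.inr rfl,
    (le_mono_iff (Ne.symm (yI_ne_zero _)) 1 2 m).2 ⟨by omega, by omega⟩⟩

end Idx
section Rep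
variable {K : Type*} [Field K] {n : ℕ}

lemma repA {m : Fin (n+2) →₀ ℕ} (h0 : m 0 = 0) (k : Fin n)
    (hk : ∀ j : Fin n, j ≠ k → m (yI j) = 0) :
    m = Finsupp.single (yI k) (m (yI k)) +
      Finsupp.single (Fin.last (n+1)) (m (Fin.last (n+1))) := by
  ext v
  rcases var_cases v with rfl | rfl | ⟨i, rfl⟩
  · simp [Finsupp.single_eq_of_ne' (yI_ne_zero k), Finsupp.single_eq_of_ne' zero_ne_last.symm, h0]
  · simp [Finsupp.single_eq_of_ne' (yI_ne_last k)]
  · rcases Decidable.eq_or_ne i k with rfl | hik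
    · simp [Finsupp.single_eq_of_ne' (yI_ne_last i).symm.symm,
        Finsupp.single_eq_of_ne' (Ne.symm (yI_ne_last i))]
    · rw [Finsupp.add_apply, Finsupp.single_eq_of_ne' (fun e => hik (yI_inj e.symm)),
        Finsupp.single_eq_of_ne' (Ne.symm (yI_ne_last i)), hk i hik]
      simp

lemma repB {hn : 3 ≤ n} {m} (hm : Std hn m) (h0 : m 0 ≠ 0) :
    m = Finsupp.single 0 (m 0) +
      Finsupp.single (yI (⟨n-1, nl_lt hn⟩ : Fin n)) (m (yI (⟨n-1, nl_lt hn⟩ : Fin n))) +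
      Finsupp.single (Fin.last (n+1)) (m (Fin.last (n+1))) := by
  set nl : Fin n := ⟨n-1, nl_lt hn⟩ with hnl
  ext v
  rcases var_cases v with rfl | rfl | ⟨i, rfl⟩
  · simp [Finsupp.single_eq_of_ne' (yI_ne_zero nl), Finsupp.single_eq_of_ne' zero_ne_last.symm]
  · simp [Finsupp.single_eq_of_ne' (yI_ne_last nl), Finsupp.single_eq_of_ne' zero_ne_last]
  · rcases Decidable.eq_or_ne i nl with rfl | hik
    · simp [Finsupp.single_eq_of_ne' (Ne.symm (yI_ne_zero nl)),
        Finsupp.single_eq_of_ne' (Ne.symm (yI_ne_last nl))]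
    · rw [Finsupp.add_apply, Finsupp.add_apply,
        Finsupp.single_eq_of_ne' (Ne.symm (yI_ne_zero i)),
        Finsupp.single_eq_of_ne' (fun e => hik (yI_inj e.symm)),
        Finsupp.single_eq_of_ne' (Ne.symm (yI_ne_last i))]
      have hlt : (i:ℕ) < n - 1 := by
        have hi2 := i.isLt
        have : (i:ℕ) ≠ n - 1 := fun e => hik (Fin.ext (by simpa using e))
        omega
      simp [std_xy hm h0 i hlt]

lemma stdA {hn : 3 ≤ n} {m} (hm : Std hn m) :
    ∃ k : Fin n, ∀ j : Fin n, j ≠ k → m (yI j) = 0 := by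
  by_cases h : ∃ k : Fin n, m (yI k) ≠ 0
  · obtain ⟨k, hk⟩ := h
    exact ⟨k, fun j hj => (std_y hm j k hj).resolve_right hk⟩
  · push_neg at h
    exact ⟨⟨0, by omega⟩, fun j _ => h j⟩

end Rep
section Gen
variable {K : Type*} [Field K] {n : ℕ}

noncomputable def Jideal (K : Type*) [Field K] (n : ℕ) : Ideal (MvPolynomial (Fin (n+2)) K) :=
  Submodule.colon (diamondIdeal K n) (Ideal.span {zP K n})

lemma mem_J_iff {f : MvPolynomial (Fin (n+2)) K} :
    f ∈ Jideal K n ↔ f * zP K n ∈ diamondIdeal K n :=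
  Ideal.mem_colon_span_singleton

lemma hgen {i j : Fin n} (hij : i ≠ j) :
    yP K n i * yP K n j - xP K n * zP K n ∈ diamondIdeal K n := by
  rcases lt_or_gt_of_ne hij with h | h
  · exact Ideal.subset_span ⟨i, j, h, rfl⟩
  · rw [mul_comm (yP K n i)]
    exact Ideal.subset_span ⟨j, i, h, rfl⟩

lemma memJ1 (i j : Fin n) (hij : i ≠ j) :
    yP K n i * yP K n j - zP K n * xP K n ∈ Jideal K n := by
  rw [mem_J_iff]
  have h : (yP K n i * yP K n j - zP K n * xP K n) * zP K n =
      zP K n * (yP K n i * yP K n j - xP K n * zP K n) := by ring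
  rw [h]
  exact Ideal.mul_mem_left _ _ (hgen hij)

lemma fin_ne_of_val {a b : Fin n} (h : (a:ℕ) ≠ (b:ℕ)) : a ≠ b := fun e => h (by rw [e])

lemma memJ2 (hn : 3 ≤ n) (k : Fin n) (hk : (k:ℕ) < n - 1) :
    xP K n * (yP K n k - yP K n (⟨n-1, nl_lt hn⟩ : Fin n)) ∈ Jideal K n := by
  set nl : Fin n := ⟨n-1, nl_lt hn⟩ with hnl
  set j : Fin n := if (k:ℕ) = 0 then ⟨1, by omega⟩ else ⟨0, by omega⟩ with hj
  have hjk : j ≠ k := by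
    rcases Decidable.eq_or_ne (k:ℕ) 0 with h | h
    · apply fin_ne_of_val; simp [hj, h]
    · apply fin_ne_of_val; simp [hj, h]; omega
  have hjnl : j ≠ nl := by
    apply fin_ne_of_val
    rcases Decidable.eq_or_ne (k:ℕ) 0 with h | h <;> simp [hj, h, hnl] <;> omega
  rw [mem_J_iff]
  have h : (xP K n * (yP K n k - yP K n nl)) * zP K n =
      yP K n nl * (yP K n k * yP K n j - xP K n * zP K n) -
      yP K n k * (yP K n nl * yP K n j - xP K n * zP K n) := by ring
  rw [h]
  exact sub_mem (Ideal.mul_mem_left _ _ (hgen hjk.symm)) (Ideal.mul_mem_left _ _ (hgen hjnl.symm))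

lemma memJ3 (hn : 3 ≤ n) :
    xP K n * ((yP K n (⟨n-1, nl_lt hn⟩ : Fin n)) ^ 2 - xP K n * zP K n) ∈ Jideal K n := by
  set nl : Fin n := ⟨n-1, nl_lt hn⟩ with hnl
  set i0 : Fin n := ⟨0, by omega⟩ with hi0
  set i1 : Fin n := ⟨1, by omega⟩ with hi1
  have h01 : i0 ≠ i1 := fin_ne_of_val (by simp [hi0, hi1])
  have h0n : i0 ≠ nl := fin_ne_of_val (by simp [hi0, hnl]; omega)
  have h1n : i1 ≠ nl := fin_ne_of_val (by simp [hi1, hnl]; omega)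
  rw [mem_J_iff]
  have h : (xP K n * ((yP K n nl) ^ 2 - xP K n * zP K n)) * zP K n =
      -((yP K n nl)^2 * (yP K n i0 * yP K n i1 - xP K n * zP K n)) +
      (yP K n i1 * yP K n nl) * (yP K n i0 * yP K n nl - xP K n * zP K n) +
      (xP K n * zP K n) * (yP K n i1 * yP K n nl - xP K n * zP K n) := by ring
  rw [h]
  exact add_mem (add_mem (neg_mem (Ideal.mul_mem_left _ _ (hgen h01)))
    (Ideal.mul_mem_left _ _ (hgen h0n))) (Ideal.mul_mem_left _ _ (hgen h1n))

end Gen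
section Bin
variable {K : Type*} [Field K] {n : ℕ}

lemma Xmul (a b : Fin (n+2)) :
    (X a * X b : MvPolynomial (Fin (n+2)) K) =
      monomial (Finsupp.single a 1 + Finsupp.single b 1) 1 := by
  rw [← pow_one (X a), ← pow_one (X b), X_pow_eq_monomial, X_pow_eq_monomial,
    monomial_mul, one_mul]

lemma bin1 (i j : Fin n) :
    yP K n i * yP K n j - zP K n * xP K n =
      monomial (Finsupp.single (yI i) 1 + Finsupp.single (yI j) 1) (1:K) -
      monomial (Finsupp.single (0 : Fin (n+2)) 1 + Finsupp.single (Fin.last (n+1)) 1) 1 := by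
  rw [yP, yP, zP, xP, Xmul, Xmul, add_comm (Finsupp.single (Fin.last (n+1)) 1)]
  rfl

lemma bin2 (hn : 3 ≤ n) (k : Fin n) :
    xP K n * (yP K n k - yP K n (⟨n-1, nl_lt hn⟩ : Fin n)) =
      monomial (Finsupp.single (0 : Fin (n+2)) 1 + Finsupp.single (yI k) 1) (1:K) -
      monomial (Finsupp.single (0 : Fin (n+2)) 1 +
        Finsupp.single (yI (⟨n-1, nl_lt hn⟩ : Fin n)) 1) 1 := by
  rw [mul_sub, xP, yP, yP, Xmul, Xmul]
  rfl

lemma bin3 (hn : 3 ≤ n) :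
    xP K n * ((yP K n (⟨n-1, nl_lt hn⟩ : Fin n)) ^ 2 - xP K n * zP K n) =
      monomial (Finsupp.single (0 : Fin (n+2)) 1 +
        Finsupp.single (yI (⟨n-1, nl_lt hn⟩ : Fin n)) 2) (1:K) -
      monomial (Finsupp.single (0 : Fin (n+2)) 2 + Finsupp.single (Fin.last (n+1)) 1) 1 := by
  rw [mul_sub, xP, yP, zP]
  congr 1
  · rw [← pow_one (X (0 : Fin (n+2))), X_pow_eq_monomial, X_pow_eq_monomial,
      monomial_mul, one_mul]
    rfl
  · rw [← mul_assoc, ← pow_two, X_pow_eq_monomial, ← pow_one (X (Fin.last (n+1))),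
      X_pow_eq_monomial, monomial_mul, one_mul]

lemma mdeg_single (v : Fin (n+2)) (k : ℕ) : mdeg (Finsupp.single v k) = k := by
  simp [mdeg, Finsupp.sum_single_index]

lemma pair_apply (a b v : Fin (n+2)) (p q : ℕ) :
    (Finsupp.single a p + Finsupp.single b q) v =
      (if a = v then p else 0) + (if b = v then q else 0) := by
  simp [Finsupp.single_apply]

lemma rl1 (i j : Fin n) :
    revlexLt (Finsupp.single (0 : Fin (n+2)) 1 + Finsupp.single (Fin.last (n+1)) 1)
      (Finsupp.single (yI i) 1 + Finsupp.single (yI j) 1) := by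
  refine Or.inr ⟨by simp [mdeg_add, mdeg_single],
    Fin.last (n+1), ?_, fun j' hj' => absurd hj' (not_lt.mpr (Fin.le_last j'))⟩
  simp [pair_apply, yI_ne_last i, yI_ne_last j, zero_ne_last]

lemma rl2 (hn : 3 ≤ n) (k : Fin n) (hk : (k:ℕ) < n - 1) :
    revlexLt (Finsupp.single (0 : Fin (n+2)) 1 +
        Finsupp.single (yI (⟨n-1, nl_lt hn⟩ : Fin n)) 1)
      (Finsupp.single (0 : Fin (n+2)) 1 + Finsupp.single (yI k) 1) := by
  set nl : Fin n := ⟨n-1, nl_lt hn⟩ with hnl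
  refine Or.inr ⟨by simp [mdeg_add, mdeg_single], yI nl, ?_, fun j' hj' => ?_⟩
  · have hne : yI k ≠ yI nl := fun e => by
      have := congrArg Fin.val (yI_inj e); simp [hnl] at this; omega
    simp [pair_apply, Ne.symm (yI_ne_zero nl), hne]
  · have hv : (n:ℕ) < (j' : ℕ) := by
      have := congrArg Fin.val (rfl : yI nl = yI nl)
      have h2 : (yI nl : ℕ) = n - 1 + 1 := rfl
      have := hj'
      rw [Fin.lt_def] at this
      omega
    have h1 : (0 : Fin (n+2)) ≠ j' := fun e => by
      have := congrArg Fin.val e; simp at this; omega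
    have h2 : yI nl ≠ j' := fun e => by
      have := congrArg Fin.val e; rw [yI_val] at this; simp [hnl] at this; omega
    have h3 : yI k ≠ j' := fun e => by
      have := congrArg Fin.val e; rw [yI_val] at this
      have := k.isLt; omega
    simp [pair_apply, h1, h2, h3]

lemma rl3 (hn : 3 ≤ n) :
    revlexLt (Finsupp.single (0 : Fin (n+2)) 2 + Finsupp.single (Fin.last (n+1)) 1)
      (Finsupp.single (0 : Fin (n+2)) 1 +
        Finsupp.single (yI (⟨n-1, nl_lt hn⟩ : Fin n)) 2) := by
  refine Or.inr ⟨by simp [mdeg_add, mdeg_single], Fin.last (n+1), ?_,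
    fun j' hj' => absurd hj' (not_lt.mpr (Fin.le_last j'))⟩
  simp [pair_apply, zero_ne_last, yI_ne_last (⟨n-1, nl_lt hn⟩ : Fin n)]

lemma isLeadMon_binomial {N : ℕ} {t s : Fin N →₀ ℕ} (h : revlexLt s t) :
    IsLeadMon (monomial t (1:K) - monomial s 1) t := by
  classical
  have hst : s ≠ t := fun e => revlexLt_irrefl t (e ▸ h)
  constructor
  · rw [MvPolynomial.mem_support_iff, coeff_sub, coeff_monomial, coeff_monomial,
      if_pos rfl, if_neg hst]
    simp
  · intro m' hm' hne
    rw [MvPolynomial.mem_support_iff, coeff_sub, coeff_monomial, coeff_monomial,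
      if_neg (Ne.symm hne)] at hm'
    have : s = m' := by
      by_contra hx
      simp [hx] at hm'
    rw [← this]
    exact h

end Bin
section Red
variable {K : Type*} [Field K] {n : ℕ}

def Gset (K : Type*) [Field K] (n : ℕ) (hn : 3 ≤ n) : Set (MvPolynomial (Fin (n+2)) K) :=
  {f | ∃ i j : Fin n, i < j ∧ f = yP K n i * yP K n j - zP K n * xP K n} ∪
  {f | ∃ k : Fin n, (k : ℕ) < n - 1 ∧ f = xP K n * (yP K n k - yP K n ⟨n - 1, nl_lt hn⟩)} ∪
  {xP K n * ((yP K n ⟨n - 1, nl_lt hn⟩) ^ 2 - xP K n * zP K n)}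

lemma GsubJ (hn : 3 ≤ n) {g : MvPolynomial (Fin (n+2)) K} (hg : g ∈ Gset K n hn) :
    g ∈ Jideal K n := by
  rcases hg with (⟨i, j, hij, rfl⟩ | ⟨k, hk, rfl⟩) | rfl
  · exact memJ1 i j (ne_of_lt hij)
  · exact memJ2 hn k hk
  · exact memJ3 hn

lemma lead_data (hn : 3 ≤ n) {t : Fin (n+2) →₀ ℕ} (ht : t ∈ Lset n hn) :
    ∃ s g, g ∈ Gset K n hn ∧ g = monomial t (1:K) - monomial s 1 ∧ revlexLt s t := by
  rcases ht with (⟨i, j, hij, rfl⟩ | ⟨k, hk, rfl⟩) | h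
  · exact ⟨_, _, Or.inl (Or.inl ⟨i, j, hij, rfl⟩), bin1 i j, rl1 i j⟩
  · exact ⟨_, _, Or.inl (Or.inr ⟨k, hk, rfl⟩), bin2 hn k, rl2 hn k hk⟩
  · rw [Set.mem_singleton_iff] at h
    subst h
    exact ⟨_, _, Or.inr rfl, bin3 hn, rl3 hn⟩

open Classical in
noncomputable def wt {n : ℕ} (hn : 3 ≤ n) (f : MvPolynomial (Fin (n+2)) K) : ℕ :=
  ∑ m' ∈ f.support.filter (fun m' => ¬ Std hn m'), (rk m' + 1)

lemma reduction (hn : 3 ≤ n) (m : Fin (n+2) →₀ ℕ) (hm : Std hn m) :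
    ∀ W (f : MvPolynomial (Fin (n+2)) K), wt hn f ≤ W → f ∈ Jideal K n →
      (∀ m' ∈ f.support, m' = m ∨ revlexLt m' m) →
      ∃ r ∈ Jideal K n, (∀ m' ∈ r.support, Std hn m') ∧
        MvPolynomial.coeff m r = MvPolynomial.coeff m f := by
  classical
  intro W
  induction W using Nat.strong_induction_on with
  | _ W ih =>
    intro f hwf hfJ hsup
    by_cases hstd : ∀ m' ∈ f.support, Std hn m'
    · exact ⟨f, hfJ, hstd, rfl⟩
    · push_neg at hstd
      obtain ⟨μ, hμs, hμn⟩ := hstd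
      obtain ⟨t, htL, htle⟩ := not_not.mp hμn
      obtain ⟨s, g, hgG, hgeq, hst⟩ := lead_data (K := K) hn htL
      set u : Fin (n+2) →₀ ℕ := μ - t with hu
      have hut : u + t = μ := tsub_add_cancel_of_le htle
      set c : K := MvPolynomial.coeff μ f with hc
      have hgm : monomial u (1:K) * g = monomial μ 1 - monomial (u + s) 1 := by
        rw [hgeq, mul_sub, monomial_mul, monomial_mul, one_mul, hut]
      set f' := f - c • (monomial u (1:K) * g) with hf'
      have hcoeff : ∀ ν, MvPolynomial.coeff ν f' =
          MvPolynomial.coeff ν f - c * (if μ = ν then 1 else 0)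
            + c * (if u + s = ν then 1 else 0) := by
        intro ν
        rw [hf', hgm]
        simp only [MvPolynomial.coeff_sub, MvPolynomial.coeff_smul, coeff_monomial,
          smul_eq_mul, mul_sub]
        ring
      -- basic order facts
      have hμm : μ ≠ m := fun e => hμn (e ▸ hm)
      have hμlt : revlexLt μ m := (hsup μ hμs).resolve_left hμm
      have huslt : revlexLt (u + s) μ := hut ▸ revlexLt_add_left u hst
      have husm : revlexLt (u + s) m := revlexLt_trans huslt hμlt
      have husμ : u + s ≠ μ := fun e => revlexLt_irrefl μ (e ▸ huslt)
      have husmne : u + s ≠ m := fun e => revlexLt_irrefl m (e ▸ husm)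
      -- membership
      have hf'J : f' ∈ Jideal K n := by
        have he : c • (monomial u (1:K) * g) = (C c * monomial u 1) * g := by
          rw [smul_eq_C_mul, mul_assoc]
        exact sub_mem hfJ (he ▸ Ideal.mul_mem_left _ _ (GsubJ hn hgG))
      -- support facts
      have hμnot : μ ∉ f'.support := by
        rw [MvPolynomial.notMem_support_iff, hcoeff μ, if_pos rfl, if_neg husμ]
        ring
      have hsub : ∀ ν ∈ f'.support, ν = u + s ∨ ν ∈ f.support := by
        intro ν hν
        by_contra hx
        push_neg at hx
        rw [MvPolynomial.mem_support_iff, hcoeff ν] at hν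
        have h1 : u + s ≠ ν := fun e => hx.1 e.symm
        have h2 : μ ≠ ν := fun e => hx.2 (e ▸ hμs)
        rw [if_neg h1, if_neg h2, MvPolynomial.notMem_support_iff.mp hx.2] at hν
        exact hν (by ring)
      -- invariant
      have hsup' : ∀ m' ∈ f'.support, m' = m ∨ revlexLt m' m := by
        intro ν hν
        rcases hsub ν hν with rfl | h
        · exact Or.inr husm
        · exact hsup ν h
      -- coeff at m preserved
      have hcm : MvPolynomial.coeff m f' = MvPolynomial.coeff m f := by
        rw [hcoeff m, if_neg hμm, if_neg husmne]
        ring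
      -- weight decreases
      have hwt : wt hn f' < wt hn f := by
        have hμA : μ ∈ f.support.filter (fun m' => ¬ Std hn m') :=
          Finset.mem_filter.mpr ⟨hμs, hμn⟩
        have hsubA : f'.support.filter (fun m' => ¬ Std hn m') ⊆
            insert (u + s) ((f.support.filter (fun m' => ¬ Std hn m')).erase μ) := by
          intro ν hν
          rw [Finset.mem_filter] at hν
          rcases hsub ν hν.1 with rfl | h
          · exact Finset.mem_insert_self _ _
          · refine Finset.mem_insert_of_mem (Finset.mem_erase.mpr ⟨?_, Finset.mem_filter.mpr ⟨h, hν.2⟩⟩)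
            intro e
            exact hμnot (e ▸ hν.1)
        calc wt hn f' ≤ ∑ ν ∈ insert (u + s) ((f.support.filter (fun m' => ¬ Std hn m')).erase μ),
              (rk ν + 1) := Finset.sum_le_sum_of_subset hsubA
          _ ≤ (rk (u + s) + 1) +
              ∑ ν ∈ (f.support.filter (fun m' => ¬ Std hn m')).erase μ, (rk ν + 1) := by
            by_cases hmem : (u + s) ∈ (f.support.filter (fun m' => ¬ Std hn m')).erase μ
            · rw [Finset.insert_eq_self.mpr hmem]
              omega
            · rw [Finset.sum_insert hmem]
          _ < (rk μ + 1) +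
              ∑ ν ∈ (f.support.filter (fun m' => ¬ Std hn m')).erase μ, (rk ν + 1) := by
            have := rk_lt_rk huslt
            omega
          _ = wt hn f := by
            rw [add_comm, Finset.sum_erase_add _ _ hμA]
            unfold wt
            exact Finset.sum_congr (Finset.filter_congr_decidable ..) (fun _ _ => rfl)
      obtain ⟨r, hrJ, hrstd, hrc⟩ := ih (wt hn f') (lt_of_lt_of_le hwt hwf) f' le_rfl hf'J hsup'
      exact ⟨r, hrJ, hrstd, by rw [hrc, hcm]⟩

end Red
section Ev
variable {K : Type*} [Field K] {n : ℕ}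

lemma mono_two {σ : Type*} (a b : σ) (p q : ℕ) :
    (monomial (Finsupp.single a p + Finsupp.single b q) (1:K)) = X a ^ p * X b ^ q := by
  rw [X_pow_eq_monomial, X_pow_eq_monomial, monomial_mul, one_mul]

lemma mono_three {σ : Type*} (a b c : σ) (p q s : ℕ) :
    (monomial (Finsupp.single a p + Finsupp.single b q + Finsupp.single c s) (1:K)) =
      X a ^ p * X b ^ q * X c ^ s := by
  rw [X_pow_eq_monomial, X_pow_eq_monomial, X_pow_eq_monomial, monomial_mul, monomial_mul,
    one_mul, one_mul]

lemma pair2 (P Q P' Q' : ℕ) :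
    Finsupp.single (0 : Fin 2) P + Finsupp.single (1 : Fin 2) Q =
      Finsupp.single (0 : Fin 2) P' + Finsupp.single (1 : Fin 2) Q' ↔ P = P' ∧ Q = Q' := by
  constructor
  · intro h
    have h0 := congrArg (fun s => s (0 : Fin 2)) h
    have h1 := congrArg (fun s => s (1 : Fin 2)) h
    simp [Finsupp.single_apply] at h0 h1
    exact ⟨h0, h1⟩
  · rintro ⟨rfl, rfl⟩
    rfl

lemma coeff_XX (P Q P' Q' : ℕ) :
    MvPolynomial.coeff (Finsupp.single (0 : Fin 2) P + Finsupp.single (1 : Fin 2) Q)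
      ((X 0 : MvPolynomial (Fin 2) K) ^ P' * X 1 ^ Q') =
      if P' = P ∧ Q' = Q then 1 else 0 := by
  rw [← mono_two, coeff_monomial]
  by_cases h : P' = P ∧ Q' = Q
  · rw [if_pos ((pair2 P' Q' P Q).mpr h), if_pos h]
  · rw [if_neg (fun e => h ((pair2 P' Q' P Q).mp e)), if_neg h]

lemma coeff_aeval_sum (v : Fin (n+2) → MvPolynomial (Fin 2) K)
    (r : MvPolynomial (Fin (n+2)) K) (M : Fin 2 →₀ ℕ) :
    MvPolynomial.coeff M (aeval v r) =
      ∑ m' ∈ r.support, MvPolynomial.coeff m' r *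
        MvPolynomial.coeff M (aeval v (monomial m' (1:K))) := by
  conv_lhs => rw [r.as_sum, map_sum, MvPolynomial.coeff_sum]
  refine Finset.sum_congr rfl fun m' _ => ?_
  have he : (monomial m') (MvPolynomial.coeff m' r) =
      C (MvPolynomial.coeff m' r) * monomial m' (1:K) := by
    rw [C_mul_monomial, mul_one]
  rw [he, map_mul, aeval_C, MvPolynomial.algebraMap_eq, MvPolynomial.coeff_C_mul]

lemma aeval_vanish (v : Fin (n+2) → MvPolynomial (Fin 2) K)
    (hv : ∀ i j : Fin n, i < j →
      aeval v (yP K n i * yP K n j - xP K n * zP K n) = 0)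
    {p : MvPolynomial (Fin (n+2)) K} (hp : p ∈ diamondIdeal K n) : aeval v p = 0 := by
  have hle : diamondIdeal K n ≤ RingHom.ker (aeval v : MvPolynomial (Fin (n+2)) K →ₐ[K] _) := by
    rw [diamondIdeal, Ideal.span_le]
    rintro q ⟨i, j, hij, rfl⟩
    exact hv i j hij
  exact hle hp

lemma aeval_r_zero (v : Fin (n+2) → MvPolynomial (Fin 2) K)
    (hv : ∀ i j : Fin n, i < j →
      aeval v (yP K n i * yP K n j - xP K n * zP K n) = 0)
    (hz : aeval v (zP K n) ≠ 0)
    {r : MvPolynomial (Fin (n+2)) K} (hr : r * zP K n ∈ diamondIdeal K n) :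
    aeval v r = 0 := by
  have h0 : aeval v r * aeval v (zP K n) = 0 := by
    rw [← map_mul]
    exact aeval_vanish v hv hr
  exact (mul_eq_zero.mp h0).resolve_right hz

noncomputable def v1 (n : ℕ) (K : Type*) [Field K] (k : Fin n) :
    Fin (n+2) → MvPolynomial (Fin 2) K :=
  fun v => if v = yI k then X 0 else if v = Fin.last (n+1) then X 1 else 0

noncomputable def v2 (n : ℕ) (K : Type*) [Field K] : Fin (n+2) → MvPolynomial (Fin 2) K :=
  fun v => if v = 0 then X 0 * X 0 else if v = Fin.last (n+1) then X 1 * X 1 else X 0 * X 1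

lemma v1_zero (k : Fin n) : v1 n K k 0 = 0 := by
  rw [v1, if_neg (Ne.symm (yI_ne_zero k)), if_neg zero_ne_last]

lemma v1_last (k : Fin n) : v1 n K k (Fin.last (n+1)) = X 1 := by
  rw [v1, if_neg (Ne.symm (yI_ne_last k)), if_pos rfl]

lemma v1_yk (k : Fin n) : v1 n K k (yI k) = X 0 := by
  rw [v1, if_pos rfl]

lemma v1_y (k j : Fin n) (h : j ≠ k) : v1 n K k (yI j) = 0 := by
  rw [v1, if_neg (fun e => h (yI_inj e)), if_neg (yI_ne_last j)]

lemma yI_def (i : Fin n) : (i.succ.castSucc : Fin (n+2)) = yI i := rfl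

lemma v1_gen (k : Fin n) (i j : Fin n) (hij : i < j) :
    aeval (v1 n K k) (yP K n i * yP K n j - xP K n * zP K n) = 0 := by
  rw [map_sub, map_mul, map_mul, yP, yP, xP, zP, aeval_X, aeval_X, aeval_X, aeval_X, v1_zero]
  simp only [yI_def]
  rcases Decidable.eq_or_ne j k with hjk | hjk
  · have hik : i ≠ k := fun e => absurd hij (by rw [e, hjk]; exact lt_irrefl k)
    rw [v1_y k i hik]
    ring
  · rw [v1_y k j hjk]
    ring

lemma v2_gen (i j : Fin n) (_hij : i < j) :
    aeval (v2 n K) (yP K n i * yP K n j - xP K n * zP K n) = 0 := by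
  have hy : ∀ i : Fin n, v2 n K (yI i) = X 0 * X 1 := fun i => by
    rw [v2, if_neg (yI_ne_zero i), if_neg (yI_ne_last i)]
  rw [map_sub, map_mul, map_mul, yP, yP, xP, zP, aeval_X, aeval_X, aeval_X, aeval_X]
  simp only [yI_def]
  rw [hy, hy, v2, if_pos rfl, v2, if_neg zero_ne_last.symm, if_pos rfl]
  ring

end Ev
section ClaimB
variable {K : Type*} [Field K] {n : ℕ}

lemma φ1_image_bc (k : Fin n) (b c : ℕ) :
    aeval (v1 n K k) (monomial (Finsupp.single (yI k) b +
      Finsupp.single (Fin.last (n+1)) c) (1:K)) =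
      (X 0 : MvPolynomial (Fin 2) K) ^ b * X 1 ^ c := by
  rw [mono_two, map_mul, map_pow, map_pow, aeval_X, aeval_X, v1_yk, v1_last]

lemma φ1_image_other (k j : Fin n) (hjk : j ≠ k) {b : ℕ} (hb : b ≠ 0) (c : ℕ) :
    aeval (v1 n K k) (monomial (Finsupp.single (yI j) b +
      Finsupp.single (Fin.last (n+1)) c) (1:K)) = 0 := by
  rw [mono_two, map_mul, map_pow, map_pow, aeval_X, aeval_X, v1_y k j hjk, zero_pow hb, zero_mul]

lemma φ1_image_B (k j : Fin n) {a : ℕ} (ha : a ≠ 0) (e c : ℕ) :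
    aeval (v1 n K k) (monomial (Finsupp.single (0 : Fin (n+2)) a +
      Finsupp.single (yI j) e + Finsupp.single (Fin.last (n+1)) c) (1:K)) = 0 := by
  rw [mono_three, map_mul, map_mul, map_pow, map_pow, map_pow, aeval_X, aeval_X, aeval_X,
    v1_zero, zero_pow ha, zero_mul, zero_mul]

lemma φ2_image (j : Fin n) (a e c : ℕ) :
    aeval (v2 n K) (monomial (Finsupp.single (0 : Fin (n+2)) a +
      Finsupp.single (yI j) e + Finsupp.single (Fin.last (n+1)) c) (1:K)) =
      (X 0 : MvPolynomial (Fin 2) K) ^ (2*a+e) * X 1 ^ (e+2*c) := by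
  rw [mono_three, map_mul, map_mul, map_pow, map_pow, map_pow, aeval_X, aeval_X, aeval_X]
  rw [show v2 n K 0 = X 0 * X 0 from by rw [v2, if_pos rfl],
    show v2 n K (yI j) = X 0 * X 1 from by rw [v2, if_neg (yI_ne_zero j), if_neg (yI_ne_last j)],
    show v2 n K (Fin.last (n+1)) = X 1 * X 1 from by
      rw [v2, if_neg zero_ne_last.symm, if_pos rfl]]
  ring

lemma stdJ_zero (hn : 3 ≤ n) {r : MvPolynomial (Fin (n+2)) K} (hrJ : r ∈ Jideal K n)
    (hstd : ∀ m' ∈ r.support, Std hn m') : r = 0 := by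
  classical
  have hzr : r * zP K n ∈ diamondIdeal K n := mem_J_iff.mp hrJ
  -- Stage 1 : no monomial of r avoids x
  have hA : ∀ m ∈ r.support, m 0 ≠ 0 := by
    intro m hm h0
    obtain ⟨k, hk⟩ := stdA (hstd m hm)
    obtain ⟨b, c, hrepm⟩ : ∃ b c, m = Finsupp.single (yI k) b +
        Finsupp.single (Fin.last (n+1)) c :=
      ⟨m (yI k), m (Fin.last (n+1)), repA h0 k hk⟩
    have hz1 : aeval (v1 n K k) (zP K n) ≠ 0 := by
      rw [zP, aeval_X, v1_last]
      exact X_ne_zero 1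
    have hr1 : aeval (v1 n K k) r = 0 :=
      aeval_r_zero _ (fun i j hij => v1_gen k i j hij) hz1 hzr
    have hsum := coeff_aeval_sum (v1 n K k) r
      (Finsupp.single (0 : Fin 2) b + Finsupp.single (1 : Fin 2) c)
    rw [hr1, MvPolynomial.coeff_zero] at hsum
    have hterm : ∀ m' ∈ r.support, m' ≠ m → MvPolynomial.coeff m' r *
        MvPolynomial.coeff (Finsupp.single (0 : Fin 2) b + Finsupp.single (1 : Fin 2) c)
          (aeval (v1 n K k) (monomial m' (1:K))) = 0 := by
      intro m' hm' hne
      refine mul_eq_zero_of_right _ ?_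
      by_cases h0' : m' 0 = 0
      · by_cases hball : ∀ j : Fin n, j ≠ k → m' (yI j) = 0
        · have hrep' : m' = Finsupp.single (yI k) (m' (yI k)) +
              Finsupp.single (Fin.last (n+1)) (m' (Fin.last (n+1))) := repA h0' k hball
          rw [hrep', φ1_image_bc, coeff_XX, if_neg ?_]
          rintro ⟨h1, h2⟩
          exact hne (by rw [hrep', h1, h2, ← hrepm])
        · push_neg at hball
          obtain ⟨j, hjk, hj0⟩ := hball
          obtain ⟨k', hk'⟩ := stdA (hstd m' hm')
          have hjk' : j = k' := by
            by_contra hx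
            exact hj0 (hk' j hx)
          subst hjk'
          have hrep' : m' = Finsupp.single (yI j) (m' (yI j)) +
              Finsupp.single (Fin.last (n+1)) (m' (Fin.last (n+1))) := repA h0' j hk'
          rw [hrep', φ1_image_other k j hjk hj0, MvPolynomial.coeff_zero]
      · have hrep' := repB (hstd m' hm') h0'
        rw [hrep', φ1_image_B k _ h0', MvPolynomial.coeff_zero]
    rw [Finset.sum_eq_single_of_mem m hm hterm, hrepm, φ1_image_bc, coeff_XX,
      if_pos ⟨rfl, rfl⟩, mul_one] at hsum
    rw [hrepm] at hm
    exact MvPolynomial.mem_support_iff.mp hm hsum.symm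
  -- Stage 2
  by_contra hr0
  obtain ⟨m, hm⟩ := MvPolynomial.support_nonempty.mpr hr0
  obtain ⟨a, e, c, ha, he1, hrepm⟩ : ∃ a e c, a ≠ 0 ∧ e ≤ 1 ∧
      m = Finsupp.single (0 : Fin (n+2)) a +
        Finsupp.single (yI (⟨n-1, nl_lt hn⟩ : Fin n)) e +
        Finsupp.single (Fin.last (n+1)) c :=
    ⟨m 0, _, _, hA m hm, std_xyy (hstd m hm) (hA m hm), repB (hstd m hm) (hA m hm)⟩
  have hz2 : aeval (v2 n K) (zP K n) ≠ 0 := by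
    rw [zP, aeval_X, show v2 n K (Fin.last (n+1)) = X 1 * X 1 from by
      rw [v2, if_neg zero_ne_last.symm, if_pos rfl]]
    exact mul_ne_zero (X_ne_zero 1) (X_ne_zero 1)
  have hr2 : aeval (v2 n K) r = 0 := aeval_r_zero _ (fun i j hij => v2_gen i j hij) hz2 hzr
  have hsum := coeff_aeval_sum (v2 n K) r
    (Finsupp.single (0 : Fin 2) (2*a+e) + Finsupp.single (1 : Fin 2) (e+2*c))
  rw [hr2, MvPolynomial.coeff_zero] at hsum
  have hterm : ∀ m' ∈ r.support, m' ≠ m → MvPolynomial.coeff m' r *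
      MvPolynomial.coeff (Finsupp.single (0 : Fin 2) (2*a+e) + Finsupp.single (1 : Fin 2) (e+2*c))
        (aeval (v2 n K) (monomial m' (1:K))) = 0 := by
    intro m' hm' hne
    refine mul_eq_zero_of_right _ ?_
    obtain ⟨a', e', c', ha', he1', hrep'⟩ : ∃ a' e' c', a' ≠ 0 ∧ e' ≤ 1 ∧
        m' = Finsupp.single (0 : Fin (n+2)) a' +
          Finsupp.single (yI (⟨n-1, nl_lt hn⟩ : Fin n)) e' +
          Finsupp.single (Fin.last (n+1)) c' :=
      ⟨m' 0, _, _, hA m' hm', std_xyy (hstd m' hm') (hA m' hm'), repB (hstd m' hm') (hA m' hm')⟩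
    rw [hrep', φ2_image, coeff_XX, if_neg ?_]
    rintro ⟨h1, h2⟩
    have hee : e' = e ∧ a' = a ∧ c' = c := by omega
    exact hne (by rw [hrep', hee.1, hee.2.1, hee.2.2, ← hrepm])
  rw [Finset.sum_eq_single_of_mem m hm hterm, hrepm, φ2_image, coeff_XX,
    if_pos ⟨rfl, rfl⟩, mul_one] at hsum
  rw [hrepm] at hm
  exact MvPolynomial.mem_support_iff.mp hm hsum.symm

end ClaimB
/-- The set `{y_iy_j − zx} ∪ {x(y_k − y_n)} ∪ {x(y_n² − xz)}` is a Gröbner basis of the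
colon ideal `J = I : z` w.r.t. the revlex order induced by `x > y_1 > ⋯ > y_n > z`. -/
theorem groebner_basis_of_diamond_colon_z (K : Type*) [Field K] (n : ℕ) (hn : 3 ≤ n) :
    IsGroebnerBasis
      ({f | ∃ i j : Fin n, i < j ∧ f = yP K n i * yP K n j - zP K n * xP K n} ∪
        {f | ∃ k : Fin n, (k : ℕ) < n - 1 ∧
          f = xP K n * (yP K n k - yP K n ⟨n - 1, by omega⟩)} ∪
        {xP K n * ((yP K n ⟨n - 1, by omega⟩) ^ 2 - xP K n * zP K n)})
      (Submodule.colon (diamondIdeal K n) (Ideal.span {zP K n})) := by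
  classical
  have hGeq : ({f | ∃ i j : Fin n, i < j ∧ f = yP K n i * yP K n j - zP K n * xP K n} ∪
        {f | ∃ k : Fin n, (k : ℕ) < n - 1 ∧
          f = xP K n * (yP K n k - yP K n ⟨n - 1, by omega⟩)} ∪
        {xP K n * ((yP K n ⟨n - 1, by omega⟩) ^ 2 - xP K n * zP K n)}) = Gset K n hn := rfl
  have hJeq : Submodule.colon (diamondIdeal K n) (Ideal.span {zP K n}) = Jideal K n := rfl
  rw [hGeq, hJeq]
  constructor
  · intro g hg
    exact GsubJ hn hg
  · apply le_antisymm
    · rw [initialIdeal]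
      apply Ideal.span_le.mpr
      rintro p ⟨f, hfJ, m, hlead, rfl⟩
      have hstd : ¬ Std hn m := by
        intro hmstd
        obtain ⟨r, hrJ, hrstd, hrc⟩ := reduction hn m hmstd (wt hn f) f le_rfl hfJ
          (fun m' hm' => if h : m' = m then Or.inl h else Or.inr (hlead.2 m' hm' h))
        rw [stdJ_zero hn hrJ hrstd, MvPolynomial.coeff_zero] at hrc
        exact (MvPolynomial.mem_support_iff.mp hlead.1) hrc.symm
      obtain ⟨t, htL, htle⟩ := not_not.mp hstd
      obtain ⟨s, g, hgG, hgeq, hst⟩ := lead_data (K := K) hn htL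
      have hlm : IsLeadMon g t := hgeq ▸ isLeadMon_binomial hst
      have hmono : (monomial m (1:K)) = monomial (m - t) 1 * monomial t 1 := by
        rw [monomial_mul, one_mul, tsub_add_cancel_of_le htle]
      rw [hmono]
      exact Ideal.mul_mem_left _ _ (Ideal.subset_span ⟨g, hgG, t, hlm, rfl⟩)
    · apply Ideal.span_le.mpr
      rintro p ⟨g, hgG, m, hlm, rfl⟩
      rw [initialIdeal]
      exact Ideal.subset_span ⟨g, GsubJ hn hgG, m, hlm, rfl⟩
end
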